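/- arXiv:2401.12345 — 2 statements merged into one kernel-verified Lean document; each statement's English description precedes it below -/
import Mathlib

section
/- Let S be a nonempty compact convex set of Hermitian positive semidefinite matrices R ∈ ℂ^{(N+M)×(N+M)}, written in block form R = [[R_x, R_xs],[R_xsᴴ, R_s]], such that every R ∈ S has positive definite top-left block R_x. Then (i) the minimax equality inf_{W ∈ ℂ^{M×N}} sup_{R ∈ S} g(W; R_x, R_xs, R_s) = sup_{R ∈ S} inf_{W ∈ ℂ^{M×N}} g(W; R_x, R_xs, R_s) holds; and (ii) if R⋆ ∈ S maximizes f1(R) := Tr(R_s − R_xsᴴ R_x⁻¹ R_xs) over S, then the pair (W⋆, R⋆) with W⋆ := R⋆_xsᴴ (R⋆_x)⁻¹ is a saddle point, i.e., g(W⋆; R) ≤ g(W⋆; R⋆) ≤ g(W; R⋆) for all R ∈ S and all W ∈ ℂ^{M×N}. -/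
open Matrix
open scoped ComplexOrder

/-- The beamforming objective
`g(W; R) := Re Tr(W R_x Wᴴ − W R_xs − R_xsᴴ Wᴴ + R_s)` where the blocks of `R` are
`R = [[R_x, R_xs],[R_xsᴴ, R_s]]`. -/
noncomputable def gObj {N M : ℕ} (W : Matrix (Fin M) (Fin N) ℂ)
    (R : Matrix (Fin N ⊕ Fin M) (Fin N ⊕ Fin M) ℂ) : ℝ :=
  ((W * R.toBlocks₁₁ * Wᴴ - W * R.toBlocks₁₂ - (R.toBlocks₁₂)ᴴ * Wᴴ
      + R.toBlocks₂₂).trace).re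

/-- The MMSE functional `f1(R) := Re Tr(R_s − R_xsᴴ R_x⁻¹ R_xs)`. -/
noncomputable def f1 {N M : ℕ} (R : Matrix (Fin N ⊕ Fin M) (Fin N ⊕ Fin M) ℂ) : ℝ :=
  ((R.toBlocks₂₂ - (R.toBlocks₁₂)ᴴ * (R.toBlocks₁₁)⁻¹ * R.toBlocks₁₂).trace).re

/-- real part of trace of a PSD matrix is nonneg -/
lemma trace_re_nonneg {n : Type*} [Fintype n] [DecidableEq n] {A : Matrix n n ℂ}
    (hA : A.PosSemidef) : 0 ≤ A.trace.re := by
  rw [Matrix.trace, Complex.re_sum]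
  refine Finset.sum_nonneg fun i _ => ?_
  have h := hA.diag_nonneg (i := i)
  exact (Complex.le_def.1 h).1

lemma quad_re_nonneg {n m : Type*} [Fintype n] [Fintype m] [DecidableEq m] {A : Matrix n n ℂ}
    (hA : A.PosSemidef) (E : Matrix m n ℂ) : 0 ≤ ((E * A * Eᴴ).trace).re :=
  trace_re_nonneg (hA.mul_mul_conjTranspose_same E)

/-- Key identity: `g(W;R) = Re Tr((W-W_R) R_x (W-W_R)ᴴ) + f1(R)`. -/
lemma gObj_decomp {N M : ℕ} (W : Matrix (Fin M) (Fin N) ℂ)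
    (R : Matrix (Fin N ⊕ Fin M) (Fin N ⊕ Fin M) ℂ)
    (hA : R.toBlocks₁₁.IsHermitian) (hdet : IsUnit R.toBlocks₁₁.det) :
    gObj W R = (((W - (R.toBlocks₁₂)ᴴ * (R.toBlocks₁₁)⁻¹) * R.toBlocks₁₁
        * (W - (R.toBlocks₁₂)ᴴ * (R.toBlocks₁₁)⁻¹)ᴴ).trace).re + f1 R := by
  set A := R.toBlocks₁₁
  set B := R.toBlocks₁₂
  set C := R.toBlocks₂₂
  have hinv : A⁻¹ᴴ = A⁻¹ := by
    rw [Matrix.conjTranspose_nonsing_inv, hA.eq]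
  have key : (W - Bᴴ * A⁻¹) * A * (W - Bᴴ * A⁻¹)ᴴ
      = W * A * Wᴴ - W * B - Bᴴ * Wᴴ + Bᴴ * A⁻¹ * B := by
    have h1 : A * A⁻¹ = 1 := Matrix.mul_nonsing_inv _ hdet
    have h2 : A⁻¹ * A = 1 := Matrix.nonsing_inv_mul _ hdet
    have e1 : ∀ (X : Matrix (Fin N) (Fin M) ℂ), A * (A⁻¹ * X) = X := fun X => by
      rw [← Matrix.mul_assoc, h1, Matrix.one_mul]
    have e2 : ∀ (X : Matrix (Fin N) (Fin M) ℂ), A⁻¹ * (A * X) = X := fun X => by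
      rw [← Matrix.mul_assoc, h2, Matrix.one_mul]
    rw [Matrix.conjTranspose_sub, Matrix.conjTranspose_mul, hinv,
      Matrix.conjTranspose_conjTranspose]
    simp only [Matrix.sub_mul, Matrix.mul_sub, Matrix.mul_assoc, e1, e2]
    abel
  have : W * A * Wᴴ - W * B - Bᴴ * Wᴴ + C
      = ((W - Bᴴ * A⁻¹) * A * (W - Bᴴ * A⁻¹)ᴴ) + (C - Bᴴ * A⁻¹ * B) := by
    rw [key]; abel
  rw [gObj, f1, this, Matrix.trace_add, Complex.add_re]

lemma f1_le_gObj {N M : ℕ} (W : Matrix (Fin M) (Fin N) ℂ)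
    {R : Matrix (Fin N ⊕ Fin M) (Fin N ⊕ Fin M) ℂ}
    (hA : R.toBlocks₁₁.PosDef) : f1 R ≤ gObj W R := by
  rw [gObj_decomp W R hA.1 hA.det_pos.ne'.isUnit]
  have := quad_re_nonneg hA.posSemidef (W - (R.toBlocks₁₂)ᴴ * (R.toBlocks₁₁)⁻¹)
  linarith

lemma gObj_wopt {N M : ℕ} {R : Matrix (Fin N ⊕ Fin M) (Fin N ⊕ Fin M) ℂ}
    (hA : R.toBlocks₁₁.PosDef) :
    gObj ((R.toBlocks₁₂)ᴴ * (R.toBlocks₁₁)⁻¹) R = f1 R := by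
  rw [gObj_decomp _ R hA.1 hA.det_pos.ne'.isUnit]
  simp

lemma toBlocks₁₁_comb {N M : ℕ} (a b : ℝ) (R R' : Matrix (Fin N ⊕ Fin M) (Fin N ⊕ Fin M) ℂ) :
    (a • R + b • R').toBlocks₁₁ = a • R.toBlocks₁₁ + b • R'.toBlocks₁₁ := by
  ext i j; simp [Matrix.toBlocks₁₁]

lemma toBlocks₁₂_comb {N M : ℕ} (a b : ℝ) (R R' : Matrix (Fin N ⊕ Fin M) (Fin N ⊕ Fin M) ℂ) :
    (a • R + b • R').toBlocks₁₂ = a • R.toBlocks₁₂ + b • R'.toBlocks₁₂ := by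
  ext i j; simp [Matrix.toBlocks₁₂]

lemma toBlocks₂₂_comb {N M : ℕ} (a b : ℝ) (R R' : Matrix (Fin N ⊕ Fin M) (Fin N ⊕ Fin M) ℂ) :
    (a • R + b • R').toBlocks₂₂ = a • R.toBlocks₂₂ + b • R'.toBlocks₂₂ := by
  ext i j; simp [Matrix.toBlocks₂₂]

/-- `gObj` is linear in `R`. -/
lemma gObj_comb {N M : ℕ} (W : Matrix (Fin M) (Fin N) ℂ) (a b : ℝ)
    (R R' : Matrix (Fin N ⊕ Fin M) (Fin N ⊕ Fin M) ℂ) :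
    gObj W (a • R + b • R') = a * gObj W R + b * gObj W R' := by
  rw [gObj, gObj, gObj, toBlocks₁₁_comb, toBlocks₁₂_comb, toBlocks₂₂_comb]
  simp only [Matrix.mul_add, Matrix.add_mul, Matrix.conjTranspose_add, Matrix.conjTranspose_smul,
    star_trivial, Matrix.mul_smul, Matrix.smul_mul, Matrix.trace_add, Matrix.trace_sub,
    Matrix.trace_smul, Complex.add_re, Complex.sub_re, Complex.smul_re, smul_smul, smul_eq_mul]
  ring

section contAux
variable {X : Type*} [TopologicalSpace X] {l m n : Type*} [Fintype m]

lemma continuousAt_matrix' {f : X → Matrix l n ℂ} {x : X}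
    (h : ∀ i j, ContinuousAt (fun a => f a i j) x) : ContinuousAt f x :=
  continuousAt_pi.2 fun i => continuousAt_pi.2 fun j => h i j

lemma ContinuousAt.entryAt {f : X → Matrix l n ℂ} {x : X} (h : ContinuousAt f x) (i : l) (j : n) :
    ContinuousAt (fun a => f a i j) x :=
  continuousAt_pi.1 (continuousAt_pi.1 h i) j

lemma ContinuousAt.matMulAt {A : X → Matrix l m ℂ} {B : X → Matrix m n ℂ} {x : X}
    (hA : ContinuousAt A x) (hB : ContinuousAt B x) :
    ContinuousAt (fun y => A y * B y) x := by
  apply continuousAt_matrix'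
  intro i j
  simp only [Matrix.mul_apply]
  exact tendsto_finset_sum _ fun k _ => (hA.entryAt i k).mul (hB.entryAt k j)

lemma ContinuousAt.traceAt {f : X → Matrix m m ℂ} {x : X} (h : ContinuousAt f x) :
    ContinuousAt (fun a => (f a).trace) x := by
  simp only [Matrix.trace, Matrix.diag]
  exact tendsto_finset_sum _ fun k _ => h.entryAt k k

lemma ContinuousAt.conjTransposeAt {f : X → Matrix l n ℂ} {x : X} (h : ContinuousAt f x) :
    ContinuousAt (fun a => (f a)ᴴ) x := by
  apply continuousAt_matrix'
  intro i j
  simp only [Matrix.conjTranspose_apply]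
  exact (h.entryAt j i).star

lemma ContinuousAt.reAt {f : X → ℂ} {x : X} (h : ContinuousAt f x) :
    ContinuousAt (fun a => (f a).re) x :=
  Complex.continuous_re.continuousAt.comp h

end contAux

/-- Continuity of `fun R => gObj W R`. -/
lemma gObj_continuous {N M : ℕ} (W : Matrix (Fin M) (Fin N) ℂ) :
    Continuous fun R : Matrix (Fin N ⊕ Fin M) (Fin N ⊕ Fin M) ℂ => gObj W R := by
  have h11 : Continuous fun R : Matrix (Fin N ⊕ Fin M) (Fin N ⊕ Fin M) ℂ => R.toBlocks₁₁ :=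
    continuous_matrix fun i j => continuous_id.matrix_elem _ _
  have h12 : Continuous fun R : Matrix (Fin N ⊕ Fin M) (Fin N ⊕ Fin M) ℂ => R.toBlocks₁₂ :=
    continuous_matrix fun i j => continuous_id.matrix_elem _ _
  have h22 : Continuous fun R : Matrix (Fin N ⊕ Fin M) (Fin N ⊕ Fin M) ℂ => R.toBlocks₂₂ :=
    continuous_matrix fun i j => continuous_id.matrix_elem _ _
  exact Complex.continuous_re.comp
    (((((continuous_const.matrix_mul h11).matrix_mul continuous_const).sub
        (continuous_const.matrix_mul h12)).sub
        (h12.matrix_conjTranspose.matrix_mul continuous_const)).add h22).matrix_trace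

set_option maxHeartbeats 1000000 in
/-- For a nonempty compact convex set `S` of Hermitian PSD block matrices with positive
definite top-left blocks: (i) the minimax equality
`inf_W sup_{R ∈ S} g(W; R) = sup_{R ∈ S} inf_W g(W; R)` holds; and (ii) if `R⋆ ∈ S`
maximizes `f1` over `S`, then `(W⋆, R⋆)` with `W⋆ = R⋆_xsᴴ (R⋆_x)⁻¹` is a saddle point. -/
theorem minimax_and_saddle_point {N M : ℕ}
    (S : Set (Matrix (Fin N ⊕ Fin M) (Fin N ⊕ Fin M) ℂ))
    (hne : S.Nonempty) (hcomp : IsCompact S) (hconv : Convex ℝ S)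
    (hS : ∀ R ∈ S, R.PosSemidef ∧ R.toBlocks₁₁.PosDef) :
    ((⨅ W : Matrix (Fin M) (Fin N) ℂ, ⨆ R : S, gObj W (R : Matrix _ _ ℂ))
        = ⨆ R : S, ⨅ W : Matrix (Fin M) (Fin N) ℂ, gObj W (R : Matrix _ _ ℂ))
    ∧ ∀ Rstar, Rstar ∈ S → (∀ R ∈ S, f1 R ≤ f1 Rstar) →
        ((∀ R ∈ S, gObj ((Rstar.toBlocks₁₂)ᴴ * (Rstar.toBlocks₁₁)⁻¹) R
            ≤ gObj ((Rstar.toBlocks₁₂)ᴴ * (Rstar.toBlocks₁₁)⁻¹) Rstar)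
        ∧ (∀ W : Matrix (Fin M) (Fin N) ℂ,
            gObj ((Rstar.toBlocks₁₂)ᴴ * (Rstar.toBlocks₁₁)⁻¹) Rstar ≤ gObj W Rstar)) := by
  haveI : Nonempty S := hne.to_subtype
  -- Part (ii)
  have part2 : ∀ Rstar, Rstar ∈ S → (∀ R ∈ S, f1 R ≤ f1 Rstar) →
      ((∀ R ∈ S, gObj ((Rstar.toBlocks₁₂)ᴴ * (Rstar.toBlocks₁₁)⁻¹) R
          ≤ gObj ((Rstar.toBlocks₁₂)ᴴ * (Rstar.toBlocks₁₁)⁻¹) Rstar)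
      ∧ (∀ W : Matrix (Fin M) (Fin N) ℂ,
          gObj ((Rstar.toBlocks₁₂)ᴴ * (Rstar.toBlocks₁₁)⁻¹) Rstar ≤ gObj W Rstar)) := by
    intro Rstar hmemst hmax
    have hPDst := (hS Rstar hmemst).2
    set Wst := (Rstar.toBlocks₁₂)ᴴ * (Rstar.toBlocks₁₁)⁻¹ with hWstdef
    have hwopt : gObj Wst Rstar = f1 Rstar := gObj_wopt hPDst
    constructor
    · -- left saddle inequality
      intro R hmemR
      rw [hwopt]
      set D := Wst * R.toBlocks₁₁ - (R.toBlocks₁₂)ᴴ with hD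
      set F : ℝ → Matrix (Fin N) (Fin N) ℂ :=
        fun t => (1 - t) • Rstar.toBlocks₁₁ + t • R.toBlocks₁₁ with hFdef
      set c : ℝ → ℝ := fun t => ((D * (F t)⁻¹ * Dᴴ).trace).re with hc
      have claim : ∀ t ∈ Set.Ioo (0:ℝ) 1, gObj Wst R - f1 Rstar ≤ t * c t := by
        intro t ht
        obtain ⟨ht0, ht1⟩ := ht
        set Rt := (1 - t) • Rstar + t • R with hRtdef
        have hmemt : Rt ∈ S := hconv hmemst hmemR (by linarith) (le_of_lt ht0) (by ring)
        have hPDt := (hS Rt hmemt).2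
        have hdet_t : IsUnit Rt.toBlocks₁₁.det := hPDt.det_pos.ne'.isUnit
        have hAt : Rt.toBlocks₁₁ = F t := toBlocks₁₁_comb _ _ _ _
        have hBt : Rt.toBlocks₁₂ = (1 - t) • Rstar.toBlocks₁₂ + t • R.toBlocks₁₂ :=
          toBlocks₁₂_comb _ _ _ _
        have hWA : Wst * Rstar.toBlocks₁₁ = (Rstar.toBlocks₁₂)ᴴ := by
          rw [hWstdef, Matrix.mul_assoc,
            Matrix.nonsing_inv_mul _ hPDst.det_pos.ne'.isUnit, Matrix.mul_one]
        have h1 : Wst * Rt.toBlocks₁₁ - (Rt.toBlocks₁₂)ᴴ = t • D := by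
          rw [hAt, hBt, hD, hFdef]
          simp only [Matrix.mul_add, Matrix.mul_smul, Matrix.conjTranspose_add,
            Matrix.conjTranspose_smul, star_trivial, hWA]
          module
        have hE : Wst - (Rt.toBlocks₁₂)ᴴ * (Rt.toBlocks₁₁)⁻¹
            = t • (D * (Rt.toBlocks₁₁)⁻¹) := by
          have : Wst - (Rt.toBlocks₁₂)ᴴ * (Rt.toBlocks₁₁)⁻¹
              = (Wst * Rt.toBlocks₁₁ - (Rt.toBlocks₁₂)ᴴ) * (Rt.toBlocks₁₁)⁻¹ := by
            rw [Matrix.sub_mul, Matrix.mul_assoc, Matrix.mul_nonsing_inv _ hdet_t,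
              Matrix.mul_one]
          rw [this, h1, Matrix.smul_mul]
        have hinvh : ((Rt.toBlocks₁₁)⁻¹)ᴴ = (Rt.toBlocks₁₁)⁻¹ := by
          rw [Matrix.conjTranspose_nonsing_inv, hPDt.1.eq]
        have hq : (Wst - (Rt.toBlocks₁₂)ᴴ * (Rt.toBlocks₁₁)⁻¹) * Rt.toBlocks₁₁
            * (Wst - (Rt.toBlocks₁₂)ᴴ * (Rt.toBlocks₁₁)⁻¹)ᴴ
            = (t * t) • (D * (Rt.toBlocks₁₁)⁻¹ * Dᴴ) := by
          rw [hE, Matrix.conjTranspose_smul, star_trivial, Matrix.conjTranspose_mul, hinvh]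
          rw [Matrix.smul_mul, Matrix.smul_mul, Matrix.mul_smul, smul_smul]
          congr 1
          rw [Matrix.mul_assoc D ((Rt.toBlocks₁₁)⁻¹) (Rt.toBlocks₁₁),
            Matrix.nonsing_inv_mul _ hdet_t, Matrix.mul_one, Matrix.mul_assoc]
        have hdecomp := gObj_decomp Wst Rt hPDt.1 hdet_t
        rw [hq] at hdecomp
        have htr : (((t * t) • (D * (Rt.toBlocks₁₁)⁻¹ * Dᴴ)).trace).re = (t * t) * c t := by
          rw [Matrix.trace_smul, Complex.smul_re, smul_eq_mul, hc, hAt]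
        rw [htr] at hdecomp
        have hcomb : gObj Wst Rt = (1 - t) * gObj Wst Rstar + t * gObj Wst R :=
          gObj_comb Wst (1 - t) t Rstar R
        have hle : f1 Rt ≤ f1 Rstar := hmax Rt hmemt
        have hct : 0 ≤ c t := by
          have h0 := quad_re_nonneg hPDt.inv.posSemidef D
          rw [hAt] at h0
          exact h0
        -- from hdecomp: gObj Wst Rt = (t*t)*c t + f1 Rt
        have key : t * (gObj Wst R - f1 Rstar) ≤ t * (t * c t) := by nlinarith [hwopt]
        have := (mul_le_mul_iff_right₀ ht0).1 key
        linarith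
      -- limit t → 0⁺
      have hFcont : Continuous F := by
        rw [hFdef]
        exact ((continuous_const.sub continuous_id).smul continuous_const).add
          (continuous_id.smul continuous_const)
      have hF0 : F 0 = Rstar.toBlocks₁₁ := by simp [hFdef]
      have hinv0 : ContinuousAt (fun t => (F t)⁻¹) 0 := by
        have h1 : ContinuousAt Inv.inv (F 0) := by
          rw [hF0]
          refine continuousAt_matrix_inv _ ?_
          rw [Ring.inverse_eq_inv']
          exact continuousAt_inv₀ hPDst.det_pos.ne'
        exact h1.comp hFcont.continuousAt
      have hccont : ContinuousAt c 0 :=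
        (((continuousAt_const.matMulAt hinv0).matMulAt continuousAt_const).traceAt).reAt
      have htend : Filter.Tendsto (fun t => t * c t) (nhdsWithin 0 (Set.Ioi (0:ℝ))) (nhds 0) := by
        have h1 : ContinuousAt (fun t => t * c t) 0 := continuousAt_id.mul hccont
        have h2 := h1.tendsto
        simp only [id, zero_mul] at h2
        exact h2.mono_left nhdsWithin_le_nhds
      have hev : ∀ᶠ t in nhdsWithin 0 (Set.Ioi (0:ℝ)), gObj Wst R - f1 Rstar ≤ t * c t := by
        filter_upwards [Ioo_mem_nhdsGT_of_mem (Set.mem_Ico.2 ⟨le_refl (0:ℝ), one_pos⟩)]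
          with t ht using claim t ht
      have := ge_of_tendsto htend hev
      linarith
    · intro W
      rw [hwopt]
      exact f1_le_gObj W hPDst
  refine ⟨?_, part2⟩
  -- Part (i)
  -- continuity of f1 on S
  have h11 : Continuous fun R : Matrix (Fin N ⊕ Fin M) (Fin N ⊕ Fin M) ℂ => R.toBlocks₁₁ :=
    continuous_matrix fun i j => continuous_id.matrix_elem _ _
  have hf1cont : ContinuousOn f1 S := by
    intro R₀ hR₀
    apply ContinuousAt.continuousWithinAt
    have hPD₀ := (hS R₀ hR₀).2
    have hinv : ContinuousAt (fun R : Matrix (Fin N ⊕ Fin M) (Fin N ⊕ Fin M) ℂ =>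
        (R.toBlocks₁₁)⁻¹) R₀ := by
      have h1 : ContinuousAt Inv.inv (R₀.toBlocks₁₁) := by
        refine continuousAt_matrix_inv _ ?_
        rw [Ring.inverse_eq_inv']
        exact continuousAt_inv₀ hPD₀.det_pos.ne'
      exact h1.comp h11.continuousAt
    have h12 : Continuous fun R : Matrix (Fin N ⊕ Fin M) (Fin N ⊕ Fin M) ℂ => R.toBlocks₁₂ :=
      continuous_matrix fun i j => continuous_id.matrix_elem _ _
    have h22 : Continuous fun R : Matrix (Fin N ⊕ Fin M) (Fin N ⊕ Fin M) ℂ => R.toBlocks₂₂ :=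
      continuous_matrix fun i j => continuous_id.matrix_elem _ _
    exact ((h22.continuousAt.sub
      ((h12.continuousAt.conjTransposeAt.matMulAt hinv).matMulAt
        h12.continuousAt)).traceAt).reAt
  obtain ⟨Rstar, hmemst, hmaxOn⟩ := hcomp.exists_isMaxOn hne hf1cont
  have hmax : ∀ R ∈ S, f1 R ≤ f1 Rstar := fun R hR => hmaxOn hR
  obtain ⟨hleft, hright⟩ := part2 Rstar hmemst hmax
  set Wst := (Rstar.toBlocks₁₂)ᴴ * (Rstar.toBlocks₁₁)⁻¹ with hWstdef
  have hwopt : gObj Wst Rstar = f1 Rstar := gObj_wopt (hS Rstar hmemst).2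
  -- boundedness facts
  have bddA : ∀ W : Matrix (Fin M) (Fin N) ℂ,
      BddAbove (Set.range fun R : S => gObj W (R : Matrix _ _ ℂ)) := by
    intro W
    rw [← Set.image_eq_range]
    exact (hcomp.image (gObj_continuous W)).bddAbove
  have bddB : ∀ R ∈ S, BddBelow (Set.range fun W : Matrix (Fin M) (Fin N) ℂ => gObj W R) := by
    intro R hR
    exact ⟨f1 R, fun x ⟨W, hW⟩ => hW ▸ f1_le_gObj W (hS R hR).2⟩
  obtain ⟨R₀, hR₀⟩ := hne
  have bddC : BddBelow (Set.range fun W : Matrix (Fin M) (Fin N) ℂ =>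
      ⨆ R : S, gObj W (R : Matrix _ _ ℂ)) := by
    refine ⟨f1 R₀, fun x ⟨W, hW⟩ => ?_⟩
    rw [← hW]
    calc f1 R₀ ≤ gObj W R₀ := f1_le_gObj W (hS R₀ hR₀).2
    _ ≤ ⨆ R : S, gObj W (R : Matrix _ _ ℂ) := le_ciSup (bddA W) ⟨R₀, hR₀⟩
  have bddD : BddAbove (Set.range fun R : S =>
      ⨅ W : Matrix (Fin M) (Fin N) ℂ, gObj W (R : Matrix _ _ ℂ)) := by
    obtain ⟨b, hb⟩ := (hcomp.image (gObj_continuous 0)).bddAbove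
    refine ⟨b, fun x ⟨R, hR⟩ => ?_⟩
    rw [← hR]
    calc (⨅ W : Matrix (Fin M) (Fin N) ℂ, gObj W (R : Matrix (Fin N ⊕ Fin M) (Fin N ⊕ Fin M) ℂ))
        ≤ gObj (0 : Matrix (Fin M) (Fin N) ℂ) (R : Matrix (Fin N ⊕ Fin M) (Fin N ⊕ Fin M) ℂ) :=
          ciInf_le (bddB (R : Matrix (Fin N ⊕ Fin M) (Fin N ⊕ Fin M) ℂ) R.2) 0
    _ ≤ b := hb ⟨(R : Matrix (Fin N ⊕ Fin M) (Fin N ⊕ Fin M) ℂ), R.2, rfl⟩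
  -- inf value at Rstar
  have hinfst : (⨅ W : Matrix (Fin M) (Fin N) ℂ, gObj W Rstar) = f1 Rstar := by
    apply le_antisymm
    · calc (⨅ W : Matrix (Fin M) (Fin N) ℂ, gObj W Rstar) ≤ gObj Wst Rstar :=
        ciInf_le (bddB Rstar hmemst) Wst
      _ = f1 Rstar := hwopt
    · exact le_ciInf fun W => f1_le_gObj W (hS Rstar hmemst).2
  apply le_antisymm
  · -- infsup ≤ supinf
    calc (⨅ W : Matrix (Fin M) (Fin N) ℂ, ⨆ R : S, gObj W (R : Matrix _ _ ℂ))
        ≤ ⨆ R : S, gObj Wst (R : Matrix _ _ ℂ) := ciInf_le bddC Wst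
    _ ≤ f1 Rstar := ciSup_le fun R => by
        calc gObj Wst (R : Matrix _ _ ℂ) ≤ gObj Wst Rstar := hleft R R.2
        _ = f1 Rstar := hwopt
    _ = ⨅ W : Matrix (Fin M) (Fin N) ℂ, gObj W Rstar := hinfst.symm
    _ ≤ ⨆ R : S, ⨅ W : Matrix (Fin M) (Fin N) ℂ, gObj W (R : Matrix _ _ ℂ) :=
        le_ciSup bddD ⟨Rstar, hmemst⟩
  · -- supinf ≤ infsup
    refine le_ciInf fun W => ?_
    refine ciSup_le fun R => ?_
    calc (⨅ W' : Matrix (Fin M) (Fin N) ℂ, gObj W' (R : Matrix _ _ ℂ))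
        ≤ gObj W (R : Matrix _ _ ℂ) := ciInf_le (bddB R R.2) W
    _ ≤ ⨆ R' : S, gObj W (R' : Matrix _ _ ℂ) := le_ciSup (bddA W) R
end

section
/- Let R̂, E ∈ ℂ^{(N+M)×(N+M)} be Hermitian positive semidefinite and ε₀ ≥ 0 be such that R̂ − ε₀E is positive semidefinite and the top-left N×N block of R̂ + ε₀E is positive definite. Then for every Hermitian R with R̂ − ε₀E ⪯ R ⪯ R̂ + ε₀E whose top-left N×N block R_x is positive definite, one has f1(R) ≤ f1(R̂ + ε₀E); i.e., the maximum of f1 over the additive moment uncertainty set is attained at the upper bound R̂ + ε₀E, so the distributionally robust beamformer is (R̂_xs + ε₀E_xs)ᴴ (R̂_x + ε₀E_x)⁻¹, where subscripts x and xs denote the corresponding blocks. -/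
open Matrix
open scoped ComplexOrder

variable {N M : ℕ}


lemma herm_blocks {R : Matrix (Fin N ⊕ Fin M) (Fin N ⊕ Fin M) ℂ} (hR : R.IsHermitian) :
    R.toBlocks₂₁ = (R.toBlocks₁₂)ᴴ ∧ (R.toBlocks₂₂).IsHermitian := by
  constructor
  · ext i j
    simp only [toBlocks₂₁, toBlocks₁₂, conjTranspose_apply, of_apply]
    exact (hR.apply (Sum.inr i) (Sum.inl j)).symm
  · ext i j
    simp only [toBlocks₂₂, conjTranspose_apply, of_apply]
    exact hR.apply (Sum.inr i) (Sum.inr j)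

lemma schur_herm {R : Matrix (Fin N ⊕ Fin M) (Fin N ⊕ Fin M) ℂ} (hR : R.IsHermitian)
    (h11 : (R.toBlocks₁₁).IsHermitian) :
    (R.toBlocks₂₂ - (R.toBlocks₁₂)ᴴ * (R.toBlocks₁₁)⁻¹ * R.toBlocks₁₂).IsHermitian := by
  have h22 := (herm_blocks hR).2
  unfold Matrix.IsHermitian at *
  rw [conjTranspose_sub, h22, conjTranspose_mul, conjTranspose_mul, conjTranspose_conjTranspose,
    conjTranspose_nonsing_inv, h11, Matrix.mul_assoc]

lemma schur_psd_mono {R S : Matrix (Fin N ⊕ Fin M) (Fin N ⊕ Fin M) ℂ}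
    (hR : R.IsHermitian) (hS : S.IsHermitian) (hRS : (S - R).PosSemidef)
    (hR11 : R.toBlocks₁₁.PosDef) (hS11 : S.toBlocks₁₁.PosDef) :
    ((S.toBlocks₂₂ - (S.toBlocks₁₂)ᴴ * (S.toBlocks₁₁)⁻¹ * S.toBlocks₁₂)
      - (R.toBlocks₂₂ - (R.toBlocks₁₂)ᴴ * (R.toBlocks₁₁)⁻¹ * R.toBlocks₁₂)).PosSemidef := by
  haveI := hR11.isUnit.invertible
  haveI := hS11.isUnit.invertible
  refine .of_dotProduct_mulVec_nonneg ((schur_herm hS hS11.isHermitian).sub (schur_herm hR hR11.isHermitian)) fun y => ?_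
  rw [sub_mulVec, dotProduct_sub, sub_nonneg]
  set x : Fin N → ℂ := -(((S.toBlocks₁₁)⁻¹ * S.toBlocks₁₂) *ᵥ y) with hx
  have hRblocks := (fromBlocks_toBlocks R).symm
  have hSblocks := (fromBlocks_toBlocks S).symm
  rw [(herm_blocks hR).1] at hRblocks
  rw [(herm_blocks hS).1] at hSblocks
  have eqS := schur_complement_eq₁₁ (A := S.toBlocks₁₁) S.toBlocks₁₂ S.toBlocks₂₂ x y hS11.isHermitian
  have eqR := schur_complement_eq₁₁ (A := R.toBlocks₁₁) R.toBlocks₁₂ R.toBlocks₂₂ x y hR11.isHermitian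
  rw [← hSblocks] at eqS
  rw [← hRblocks] at eqR
  have hx0 : x + ((S.toBlocks₁₁)⁻¹ * S.toBlocks₁₂) *ᵥ y = 0 := by simp [hx]
  rw [hx0] at eqS
  simp only [star_zero, zero_vecMul, zero_dotProduct, zero_add] at eqS
  have key : star (x ⊕ᵥ y) ᵥ* R ⬝ᵥ (x ⊕ᵥ y) ≤ star (x ⊕ᵥ y) ᵥ* S ⬝ᵥ (x ⊕ᵥ y) := by
    have := hRS.dotProduct_mulVec_nonneg (x ⊕ᵥ y)
    rw [sub_mulVec, dotProduct_sub, dotProduct_mulVec, dotProduct_mulVec, sub_nonneg] at this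
    exact this
  have hq : 0 ≤ star (x + ((R.toBlocks₁₁)⁻¹ * R.toBlocks₁₂) *ᵥ y) ᵥ*
      R.toBlocks₁₁ ⬝ᵥ (x + ((R.toBlocks₁₁)⁻¹ * R.toBlocks₁₂) *ᵥ y) := by
    have := hR11.posSemidef.dotProduct_mulVec_nonneg (x + ((R.toBlocks₁₁)⁻¹ * R.toBlocks₁₂) *ᵥ y)
    rwa [dotProduct_mulVec] at this
  calc star y ⬝ᵥ (R.toBlocks₂₂ - (R.toBlocks₁₂)ᴴ * (R.toBlocks₁₁)⁻¹ * R.toBlocks₁₂) *ᵥ y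
      ≤ star (x ⊕ᵥ y) ᵥ* R ⬝ᵥ (x ⊕ᵥ y) := by
        rw [eqR, dotProduct_mulVec]; exact le_add_of_nonneg_left hq
    _ ≤ star (x ⊕ᵥ y) ᵥ* S ⬝ᵥ (x ⊕ᵥ y) := key
    _ = star y ⬝ᵥ (S.toBlocks₂₂ - (S.toBlocks₁₂)ᴴ * (S.toBlocks₁₁)⁻¹ * S.toBlocks₁₂) *ᵥ y := by
        rw [eqS, dotProduct_mulVec]

lemma psd_trace_re_nonneg {n : ℕ} {A : Matrix (Fin n) (Fin n) ℂ} (hA : A.PosSemidef) :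
    0 ≤ A.trace.re := by
  have htr : (0 : ℂ) ≤ A.trace := by
    rw [Matrix.trace]
    refine Finset.sum_nonneg fun i _ => ?_
    have := hA.dotProduct_mulVec_nonneg (Pi.single i 1)
    simpa [dotProduct, mulVec, Pi.single_apply] using this
  exact (Complex.le_def.mp htr).1

/-- Over the additive moment uncertainty set `R̂ − ε₀E ⪯ R ⪯ R̂ + ε₀E`, the maximum of
`f1` is attained at the upper bound `R̂ + ε₀E`; the corresponding distributionally robust
beamformer is `(R̂_xs + ε₀E_xs)ᴴ (R̂_x + ε₀E_x)⁻¹`. -/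
theorem additive_moment_worst_case {N M : ℕ}
    (Rhat E : Matrix (Fin N ⊕ Fin M) (Fin N ⊕ Fin M) ℂ)
    (hRhat : Rhat.PosSemidef) (hE : E.PosSemidef)
    (ε₀ : ℝ) (hε : 0 ≤ ε₀)
    (hlow : (Rhat - ε₀ • E).PosSemidef)
    (hupx : ((Rhat + ε₀ • E).toBlocks₁₁).PosDef) :
    (∀ R : Matrix (Fin N ⊕ Fin M) (Fin N ⊕ Fin M) ℂ, R.IsHermitian →
        (R - (Rhat - ε₀ • E)).PosSemidef → ((Rhat + ε₀ • E) - R).PosSemidef →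
        R.toBlocks₁₁.PosDef →
        f1 R ≤ f1 (Rhat + ε₀ • E))
    ∧ ((Rhat + ε₀ • E).toBlocks₁₂)ᴴ * ((Rhat + ε₀ • E).toBlocks₁₁)⁻¹
        = (Rhat.toBlocks₁₂ + ε₀ • E.toBlocks₁₂)ᴴ
            * (Rhat.toBlocks₁₁ + ε₀ • E.toBlocks₁₁)⁻¹ := by

  have hSH : (Rhat + ε₀ • E).IsHermitian := by
    unfold Matrix.IsHermitian
    rw [conjTranspose_add, hRhat.1]
    congr 1
    ext i j
    simp [← hE.1.apply j i]
  constructor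
  · intro R hR hlo hhi hRx
    have hmono := schur_psd_mono hR hSH hhi hRx hupx
    have := psd_trace_re_nonneg hmono
    rw [trace_sub, Complex.sub_re] at this
    unfold f1
    linarith
  · have h11 : (Rhat + ε₀ • E).toBlocks₁₁ = Rhat.toBlocks₁₁ + ε₀ • E.toBlocks₁₁ := by
      ext i j; simp [toBlocks₁₁]
    have h12 : (Rhat + ε₀ • E).toBlocks₁₂ = Rhat.toBlocks₁₂ + ε₀ • E.toBlocks₁₂ := by
      ext i j; simp [toBlocks₁₂]
    rw [h11, h12]
end
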